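/- Treating ξ and ξ̄ as independent complex variables, the polynomial Im-part condition for the tetrahedral charge 3 spectral curve, namely P(ξ,ξ̄) := (1−5√2ξ³−ξ⁶)²(2ξ+5√2ξ̄²−5√2ξξ̄³+2ξ̄⁵)³ − (1−5√2ξ̄³−ξ̄⁶)²(2ξ̄+5√2ξ²−5√2ξ̄ξ³+2ξ⁵)³, factorizes as P(ξ,ξ̄) = (ξ−ξ̄)(1+ξξ̄)³(ξ²+ξξ̄+ξ̄²)·h(ξ,ξ̄) for some polynomial h with real coefficients that is symmetric under swapping ξ and ξ̄. -/
import Mathlib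


open MvPolynomial

/-- X = ξ and Y = ξ̄, treated as independent indeterminates over ℝ. -/
noncomputable def Xv : MvPolynomial (Fin 2) ℝ := MvPolynomial.X 0
noncomputable def Yv : MvPolynomial (Fin 2) ℝ := MvPolynomial.X 1
noncomputable def s2 : MvPolynomial (Fin 2) ℝ := MvPolynomial.C (Real.sqrt 2)

/-- The cubed Lagrangian condition polynomial for the tetrahedral charge 3
spectral curve. -/
noncomputable def Ppoly : MvPolynomial (Fin 2) ℝ :=
  (1 - 5*s2*Xv^3 - Xv^6)^2 * (2*Xv + 5*s2*Yv^2 - 5*s2*Xv*Yv^3 + 2*Yv^5)^3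
  - (1 - 5*s2*Yv^3 - Yv^6)^2 * (2*Yv + 5*s2*Xv^2 - 5*s2*Yv*Xv^3 + 2*Xv^5)^3

noncomputable def hpoly : MvPolynomial (Fin 2) ℝ :=
  (8) + (-330)*s2*Yv^3 + (84)*Yv^6 + (20)*s2*Yv^9 + (-324)*Xv*Yv + (1620)*s2*Xv*Yv^4 + (324)*Xv*Yv^7 + (324)*Xv^2*Yv^2 + (-1620)*s2*Xv^2*Yv^5 + (-324)*Xv^2*Yv^8 + (-330)*s2*Xv^3 + (5976)*Xv^3*Yv^3 + (720)*s2*Xv^3*Yv^6 + (-84)*Xv^3*Yv^9 + (1620)*s2*Xv^4*Yv + (-16200)*Xv^4*Yv^4 + (-1620)*s2*Xv^4*Yv^7 + (-1620)*s2*Xv^5*Yv^2 + (16200)*Xv^5*Yv^5 + (1620)*s2*Xv^5*Yv^8 + (84)*Xv^6 + (720)*s2*Xv^6*Yv^3 + (-5976)*Xv^6*Yv^6 + (-330)*s2*Xv^6*Yv^9 + (324)*Xv^7*Yv + (-1620)*s2*Xv^7*Yv^4 + (-324)*Xv^7*Yv^7 + (-324)*Xv^8*Yv^2 + (1620)*s2*Xv^8*Yv^5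 + (324)*Xv^8*Yv^8 + (20)*s2*Xv^9 + (-84)*Xv^9*Yv^3 + (-330)*s2*Xv^9*Yv^6 + (-8)*Xv^9*Yv^9

lemma s2sq : s2^2 = 2 := by
  have : (Real.sqrt 2)^2 = 2 := Real.sq_sqrt (by norm_num)
  simp [s2, ← map_pow, this]
  rfl

/-- P(ξ,ξ̄) factorizes as (ξ−ξ̄)(1+ξξ̄)³(ξ²+ξξ̄+ξ̄²)·h(ξ,ξ̄) with h a real
polynomial symmetric under swapping ξ and ξ̄. -/
theorem stmt13 : ∃ h : MvPolynomial (Fin 2) ℝ,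
    Ppoly = (Xv - Yv) * (1 + Xv*Yv)^3 * (Xv^2 + Xv*Yv + Yv^2) * h ∧
    MvPolynomial.rename (⇑(Equiv.swap (0 : Fin 2) 1)) h = h := by
  refine ⟨hpoly, ?_, ?_⟩
  · unfold Ppoly hpoly
    linear_combination ((125)*s2*Yv^6 + (-50)*Yv^9 + (150)*Xv*Yv^4 + (-375)*s2*Xv*Yv^7 + (-300)*Xv*Yv^10 + (300)*Xv^2*Yv^5 + (-1125)*s2*Xv^2*Yv^8 + (-450)*Xv^2*Yv^11 + (-2950)*Xv^3*Yv^6 + (-1250)*s2^2*Xv^3*Yv^6 + (-125)*s2*Xv^3*Yv^9 + (-150)*Xv^4*Yv + (-900)*Xv^4*Yv^7 + (1500)*s2*Xv^4*Yv^10 + (450)*Xv^4*Yv^13 + (-300)*Xv^5*Yv^2 + (7500)*Xv^5*Yv^8 + (3750)*s2^2*Xv^5*Yv^8 + (1500)*s2*Xv^5*Yv^11 + (300)*Xv^5*Yv^14 + (-125)*s2*Xv^6 + (2950)*Xv^6*Yv^3 + (1250)*s2^2*Xv^6*Yv^3 + (-125)*s2*Xv^6*Yv^12 + (50)*Xv^6*Yv^15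 + (375)*s2*Xv^7*Yv + (900)*Xv^7*Yv^4 + (-7500)*Xv^7*Yv^10 + (-3750)*s2^2*Xv^7*Yv^10 + (-1125)*s2*Xv^7*Yv^13 + (1125)*s2*Xv^8*Yv^2 + (-7500)*Xv^8*Yv^5 + (-3750)*s2^2*Xv^8*Yv^5 + (900)*Xv^8*Yv^11 + (-375)*s2*Xv^8*Yv^14 + (50)*Xv^9 + (125)*s2*Xv^9*Yv^3 + (2950)*Xv^9*Yv^12 + (1250)*s2^2*Xv^9*Yv^12 + (125)*s2*Xv^9*Yv^15 + (300)*Xv^10*Yv + (-1500)*s2*Xv^10*Yv^4 + (7500)*Xv^10*Yv^7 + (3750)*s2^2*Xv^10*Yv^7 + (-300)*Xv^10*Yv^13 + (450)*Xv^11*Yv^2 + (-1500)*s2*Xv^11*Yv^5 + (-900)*Xv^11*Yv^8 + (-150)*Xv^11*Yv^14 + (125)*s2*Xv^12*Yv^6 + (-2950)*Xv^12*Yv^9 + (-1250)*s2^2*Xv^12*Yv^9 + (-450)*Xv^13*Yv^4 + (1125)*s2*Xv^13*Yv^7 + (300)*Xv^13*Yv^10 + (-300)*Xv^14*Yv^5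 + (375)*s2*Xv^14*Yv^8 + (150)*Xv^14*Yv^11 + (-50)*Xv^15*Yv^6 + (-125)*s2*Xv^15*Yv^9) * s2sq
  · have e0 : MvPolynomial.rename (⇑(Equiv.swap (0 : Fin 2) 1)) Xv = Yv := by
      simp [Xv, Yv, rename_X]
    have e1 : MvPolynomial.rename (⇑(Equiv.swap (0 : Fin 2) 1)) Yv = Xv := by
      simp [Xv, Yv, rename_X]
    have e2 : MvPolynomial.rename (⇑(Equiv.swap (0 : Fin 2) 1)) s2 = s2 := by
      simp [s2]
    unfold hpoly
    simp only [map_add, map_mul, map_pow, map_neg, map_sub, map_ofNat, map_one,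
      e0, e1, e2, MvPolynomial.rename_C]
    ring
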